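/- Let q₁ ∈ (0,1) and let A be inverse Gaussian with parameters (1,c²), and define t* = sup{t ∈ ℝ : E[A^t] q₁ ≤ 1}. If q₁ E[A^{−1/2}] > 1, then 1 < t* < 3/2. -/

import Mathlib

open MeasureTheory Real

/-- Density of the inverse Gaussian distribution with parameters `(1, c²)`. -/
noncomputable def igDensity (c x : ℝ) : ℝ :=
  if 0 ≤ x then c / Real.sqrt (2 * Real.pi * x ^ 3) * Real.exp (-(c ^ 2 * (x - 1) ^ 2) / (2 * x))
  else 0

/-- The inverse Gaussian distribution with parameters `(1, c²)` as a measure on `ℝ`. -/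
noncomputable def igMeasure (c : ℝ) : Measure ℝ :=
  volume.withDensity fun x => ENNReal.ofReal (igDensity c x)

/-- `E[A^t]` for `A` inverse Gaussian with parameters `(1, c²)`. -/
noncomputable def igMoment (c t : ℝ) : ℝ := ∫ x, x ^ t ∂(igMeasure c)

section AuxIG
open Set

lemma igDensity_nonneg (c x : ℝ) (hc : 0 < c) : 0 ≤ igDensity c x := by
  unfold igDensity
  split_ifs with h
  · positivity
  · exact le_refl 0

lemma igDensity_of_nonpos (c x : ℝ) (hx : x ≤ 0) : igDensity c x = 0 := by
  unfold igDensity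
  rcases lt_or_eq_of_le hx with h | h
  · rw [if_neg (by linarith)]
  · subst h
    simp

lemma measurable_igDensity (c : ℝ) : Measurable (igDensity c) := by
  unfold igDensity
  apply Measurable.ite measurableSet_Ici <;> fun_prop

lemma igMoment_eq (c t : ℝ) (hc : 0 < c) :
    igMoment c t = ∫ x in Ioi (0:ℝ), x ^ t * igDensity c x := by
  unfold igMoment igMeasure
  simp only [ENNReal.ofReal]
  rw [integral_withDensity_eq_integral_smul
    (f_meas := show Measurable (fun x => (igDensity c x).toNNReal) from measurable_real_toNNReal.comp (measurable_igDensity c)) (g := fun x => x ^ t)]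
  rw [← setIntegral_eq_integral_of_forall_compl_eq_zero (s := Ioi (0:ℝ))]
  · apply setIntegral_congr_fun measurableSet_Ioi
    intro x hx
    simp only [NNReal.smul_def, smul_eq_mul]
    rw [Real.coe_toNNReal _ (igDensity_nonneg c x hc), mul_comm]
  · intro x hx
    simp only [mem_Ioi, not_lt] at hx
    simp [NNReal.smul_def, igDensity_of_nonpos c x hx]

lemma pow_le_factorial_mul_exp (x : ℝ) (hx : 0 ≤ x) (n : ℕ) :
    x ^ n ≤ (n.factorial : ℝ) * Real.exp x := by
  have h1 : x ^ n / (n.factorial : ℝ) ≤ Real.exp x := by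
    calc x ^ n / (n.factorial : ℝ) ≤ ∑ i ∈ Finset.range (n+1), x ^ i / (i.factorial : ℝ) :=
          Finset.single_le_sum (f := fun i => x ^ i / (i.factorial : ℝ))
            (fun i _ => by positivity) (by simp)
      _ ≤ Real.exp x := Real.sum_le_exp_of_nonneg hx _
  have hn : (0:ℝ) < (n.factorial : ℝ) := by positivity
  rw [div_le_iff₀ hn] at h1
  linarith [h1]

lemma igKernel_eq (c t x : ℝ) (hc : 0 < c) (hx : 0 < x) :
    x ^ t * igDensity c x =
      c * Real.exp (c ^ 2) / Real.sqrt (2 * Real.pi) *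
        (x ^ (t - 3/2) * Real.exp (-(c^2/2) * x) * Real.exp (-(c^2/2) / x)) := by
  unfold igDensity
  rw [if_pos hx.le]
  have h1 : Real.sqrt (2 * Real.pi * x ^ 3) = Real.sqrt (2 * Real.pi) * x ^ ((3:ℝ)/2) := by
    rw [Real.sqrt_mul (by positivity)]
    congr 1
    rw [show (x:ℝ)^3 = x ^ ((3:ℝ)) from (Real.rpow_natCast x 3).symm,
      Real.sqrt_eq_rpow, ← Real.rpow_mul hx.le]
    norm_num
  have h2 : Real.exp (-(c ^ 2 * (x - 1) ^ 2) / (2 * x)) =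
      Real.exp (c ^ 2) * (Real.exp (-(c^2/2) * x) * Real.exp (-(c^2/2) / x)) := by
    rw [← Real.exp_add, ← Real.exp_add]
    congr 1
    field_simp
    ring
  rw [h1, h2]
  have hQ : x ^ t = x ^ (t - 3/2) * x ^ ((3:ℝ)/2) := by
    rw [← Real.rpow_add hx]
    norm_num
  have hS : (0:ℝ) < Real.sqrt (2 * Real.pi) := Real.sqrt_pos.2 (by positivity)
  have hP : (0:ℝ) < x ^ ((3:ℝ)/2) := Real.rpow_pos_of_pos hx _
  generalize Real.exp (-(c^2/2) * x) = E1
  generalize Real.exp (-(c^2/2) / x) = E2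
  rw [hQ]
  generalize hPP : x ^ ((3:ℝ)/2) = P at *
  generalize x ^ (t - 3/2) = R
  field_simp

lemma igKernel_nonneg (c t x : ℝ) (hc : 0 < c) (hx : 0 < x) :
    0 ≤ x ^ t * igDensity c x :=
  mul_nonneg (Real.rpow_nonneg hx.le t) (igDensity_nonneg c x hc)

lemma measurable_igKernel (c t : ℝ) : Measurable (fun x => x ^ t * igDensity c x) :=
  (measurable_id.pow_const t).mul (measurable_igDensity c)

lemma integrableOn_igKernel (c t : ℝ) (hc : 0 < c) :
    IntegrableOn (fun x => x ^ t * igDensity c x) (Ioi (0:ℝ)) := by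
  set a : ℝ := c ^ 2 / 2 with ha_def
  have ha : 0 < a := by positivity
  set C : ℝ := c * Real.exp (c ^ 2) / Real.sqrt (2 * Real.pi) with hC_def
  have hC : 0 < C := div_pos (by positivity) (Real.sqrt_pos.2 (by positivity))
  rw [← Set.Ioc_union_Ioi_eq_Ioi (zero_le_one)]
  apply IntegrableOn.union
  · -- on Ioc 0 1 : bounded
    set n : ℕ := ⌈(3:ℝ)/2 - t⌉₊ with hn_def
    have hn : (3:ℝ)/2 - t ≤ n := Nat.le_ceil _
    apply Integrable.mono' (g := fun _ => C * ((n.factorial : ℝ) / a ^ n))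
    · exact integrable_const _
    · exact ((measurable_igKernel c t).aestronglyMeasurable).restrict
    · rw [ae_restrict_iff' measurableSet_Ioc]
      apply ae_of_all
      intro x hx
      obtain ⟨hx0, hx1⟩ := hx
      rw [Real.norm_eq_abs, abs_of_nonneg (igKernel_nonneg c t x hc hx0),
        igKernel_eq c t x hc hx0]
      apply mul_le_mul_of_nonneg_left _ hC.le
      have hxr : (0:ℝ) ≤ x ^ (t - 3/2) := Real.rpow_nonneg hx0.le _
      have hb1 : Real.exp (-(c^2/2) * x) ≤ 1 := by
        rw [Real.exp_le_one_iff]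
        nlinarith
      have hb2 : Real.exp (-(c^2/2) / x) ≤ (n.factorial : ℝ) * x ^ n / a ^ n := by
        have h0 : (a / x) ^ n * Real.exp (-(a / x)) ≤ (n.factorial : ℝ) := by
          calc (a / x) ^ n * Real.exp (-(a / x))
              ≤ ((n.factorial : ℝ) * Real.exp (a / x)) * Real.exp (-(a / x)) :=
                mul_le_mul_of_nonneg_right
                  (pow_le_factorial_mul_exp _ (by positivity) n) (Real.exp_pos _).le
            _ = (n.factorial : ℝ) := by rw [mul_assoc, ← Real.exp_add]; simp
        have hpos : (0:ℝ) < (a / x) ^ n := by positivity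
        rw [← le_div_iff₀' hpos] at h0
        have heq : (n.factorial : ℝ) / (a / x) ^ n = (n.factorial : ℝ) * x ^ n / a ^ n := by
          rw [div_pow]
          field_simp
        rw [heq] at h0
        calc Real.exp (-(c^2/2) / x) = Real.exp (-(a / x)) := by rw [neg_div]
          _ ≤ _ := h0
      calc x ^ (t - 3/2) * Real.exp (-(c^2/2) * x) * Real.exp (-(c^2/2) / x)
          ≤ x ^ (t - 3/2) * 1 * ((n.factorial : ℝ) * x ^ n / a ^ n) := by
            apply mul_le_mul (mul_le_mul_of_nonneg_left hb1 hxr) hb2 (Real.exp_pos _).le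
            exact mul_nonneg hxr zero_le_one
        _ = (n.factorial : ℝ) / a ^ n * (x ^ (t - 3/2) * x ^ ((n:ℕ):ℝ)) := by
            rw [Real.rpow_natCast]; ring
        _ = (n.factorial : ℝ) / a ^ n * x ^ (t - 3/2 + (n:ℝ)) := by
            rw [← Real.rpow_add hx0]
        _ ≤ (n.factorial : ℝ) / a ^ n * 1 := by
            apply mul_le_mul_of_nonneg_left
              (Real.rpow_le_one hx0.le hx1 (by linarith)) (by positivity)
        _ = (n.factorial : ℝ) / a ^ n := mul_one _
  · -- on Ioi 1 : exponential decay
    set m : ℕ := ⌈t⌉₊ with hm_def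
    have hm : t ≤ m := Nat.le_ceil _
    apply Integrable.mono'
      (g := fun x => C * ((m.factorial : ℝ) / (a/2) ^ m) * Real.exp (-(a/2) * x))
    · exact (exp_neg_integrableOn_Ioi 1 (by positivity : (0:ℝ) < a/2)).const_mul _
    · exact ((measurable_igKernel c t).aestronglyMeasurable).restrict
    · rw [ae_restrict_iff' measurableSet_Ioi]
      apply ae_of_all
      intro x hx
      rw [mem_Ioi] at hx
      have hx0 : (0:ℝ) < x := lt_trans one_pos hx
      rw [Real.norm_eq_abs, abs_of_nonneg (igKernel_nonneg c t x hc hx0),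
        igKernel_eq c t x hc hx0, mul_assoc, ← hC_def, mul_assoc C]
      apply mul_le_mul_of_nonneg_left _ hC.le
      have hb0 : Real.exp (-(c^2/2) / x) ≤ 1 := by
        rw [Real.exp_le_one_iff, neg_div]
        exact neg_nonpos.2 (by positivity)
      have hb1 : x ^ (t - 3/2) ≤ x ^ ((m:ℕ):ℝ) :=
        Real.rpow_le_rpow_of_exponent_le hx.le (by push_cast; linarith)
      have hb2 : x ^ (m:ℕ) ≤ (m.factorial : ℝ) / (a/2) ^ m * Real.exp ((a/2) * x) := by
        have h0 : ((a/2) * x) ^ m ≤ (m.factorial : ℝ) * Real.exp ((a/2) * x) :=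
          pow_le_factorial_mul_exp _ (by positivity) m
        rw [mul_pow] at h0
        rw [div_mul_eq_mul_div, le_div_iff₀ (by positivity : (0:ℝ) < (a/2)^m)]
        calc x ^ m * (a/2) ^ m = (a/2) ^ m * x ^ m := mul_comm _ _
          _ ≤ (m.factorial : ℝ) * Real.exp ((a/2) * x) := h0
      have hsplit : Real.exp (-(c^2/2) * x) = Real.exp (-(a/2) * x) * Real.exp (-(a/2) * x) := by
        rw [← Real.exp_add, ha_def]
        ring_nf
      calc x ^ (t - 3/2) * (Real.exp (-(c^2/2) * x) * Real.exp (-(c^2/2) / x))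
          ≤ x ^ ((m:ℕ):ℝ) * (Real.exp (-(c^2/2) * x) * 1) := by
            apply mul_le_mul hb1 (mul_le_mul_of_nonneg_left hb0 (Real.exp_pos _).le)
              (mul_nonneg (Real.exp_pos _).le (Real.exp_pos _).le)
              (Real.rpow_nonneg hx0.le _)
        _ = x ^ (m:ℕ) * (Real.exp (-(a/2) * x) * Real.exp (-(a/2) * x)) := by
            rw [Real.rpow_natCast, mul_one, hsplit]
        _ ≤ ((m.factorial : ℝ) / (a/2) ^ m * Real.exp ((a/2) * x)) *
              (Real.exp (-(a/2) * x) * Real.exp (-(a/2) * x)) := by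
            apply mul_le_mul_of_nonneg_right hb2
              (mul_nonneg (Real.exp_pos _).le (Real.exp_pos _).le)
        _ = (m.factorial : ℝ) / (a/2) ^ m * Real.exp (-(a/2) * x) := by
            rw [mul_assoc, ← mul_assoc (Real.exp ((a/2)*x)), ← Real.exp_add]
            ring_nf
            rw [Real.exp_zero]
            ring

lemma igKernel_zero_of_nonpos (c t x : ℝ) (hx : x ≤ 0) : x ^ t * igDensity c x = 0 := by
  rw [igDensity_of_nonpos c x hx, mul_zero]

lemma integrable_rpow_igMeasure (c t : ℝ) (hc : 0 < c) :
    Integrable (fun x => x ^ t) (igMeasure c) := by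
  unfold igMeasure
  rw [integrable_withDensity_iff ((measurable_igDensity c).ennreal_ofReal)
    (ae_of_all _ fun x => ENNReal.ofReal_lt_top)]
  have heq : (fun x : ℝ => x ^ t * (ENNReal.ofReal (igDensity c x)).toReal) =
      (Ioi (0:ℝ)).indicator (fun x => x ^ t * igDensity c x) := by
    funext x
    rw [ENNReal.toReal_ofReal (igDensity_nonneg c x hc)]
    by_cases hx : x ∈ Ioi (0:ℝ)
    · rw [indicator_of_mem hx]
    · rw [indicator_of_notMem hx, igKernel_zero_of_nonpos c t x (by simpa using hx)]
  rw [heq]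
  exact (integrableOn_igKernel c t hc).integrable_indicator measurableSet_Ioi

lemma igMoment_nonneg (c t : ℝ) (hc : 0 < c) : 0 ≤ igMoment c t := by
  rw [igMoment_eq c t hc]
  exact setIntegral_nonneg measurableSet_Ioi fun x hx => igKernel_nonneg c t x hc hx

lemma inv_image_Ioi : (fun x : ℝ => x⁻¹) '' Ioi 0 = Ioi 0 := by
  ext y
  simp only [mem_image, mem_Ioi]
  constructor
  · rintro ⟨x, hx, rfl⟩
    exact inv_pos.2 hx
  · intro hy
    exact ⟨y⁻¹, inv_pos.2 hy, inv_inv y⟩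

lemma igMoment_symm (c t : ℝ) (hc : 0 < c) : igMoment c (1 - t) = igMoment c t := by
  rw [igMoment_eq c (1-t) hc, igMoment_eq c t hc]
  have key := integral_image_eq_integral_abs_deriv_smul (s := Ioi (0:ℝ))
    (f := fun x => x⁻¹) (f' := fun x => -(x^2)⁻¹) measurableSet_Ioi
    (fun x hx => (hasDerivAt_inv (ne_of_gt (mem_Ioi.1 hx))).hasDerivWithinAt)
    (fun p _ q _ h => inv_injective h) (fun x => x ^ t * igDensity c x)
  rw [inv_image_Ioi] at key
  rw [key]
  apply setIntegral_congr_fun measurableSet_Ioi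
  intro x hx
  rw [mem_Ioi] at hx
  have hxi : (0:ℝ) < x⁻¹ := inv_pos.2 hx
  simp only [smul_eq_mul]
  rw [igKernel_eq c t x⁻¹ hc hxi, igKernel_eq c (1-t) x hc hx,
    abs_neg, abs_inv, abs_pow, abs_of_pos hx]
  have e1 : -(c^2/2) * x⁻¹ = -(c^2/2) / x := (div_eq_mul_inv _ _).symm
  have e2 : -(c^2/2) / x⁻¹ = -(c^2/2) * x := by field_simp
  have e3 : (x⁻¹) ^ (t - 3/2) = x ^ (-(t - 3/2)) := by
    rw [← Real.rpow_neg_one x, ← Real.rpow_mul hx.le]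
    ring_nf
  have e4 : (x^2)⁻¹ = x ^ ((-2:ℝ)) := by
    rw [← Real.rpow_natCast x 2, ← Real.rpow_neg hx.le]
    norm_num
  have e5 : x ^ ((-2:ℝ)) * x ^ (-(t - 3/2)) = x ^ (1 - t - 3/2) := by
    rw [← Real.rpow_add hx]
    norm_num
    ring_nf
  rw [e1, e2, e3, e4, ← e5]
  ring

noncomputable def igU (c x : ℝ) : ℝ := c * (Real.sqrt x - (Real.sqrt x)⁻¹)
noncomputable def igU' (c x : ℝ) : ℝ :=
  c * (1/(2*Real.sqrt x) + 1/(2*Real.sqrt x*x))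

lemma igU_hasDerivAt (c x : ℝ) (hx : 0 < x) : HasDerivAt (igU c) (igU' c x) x := by
  have hs : (0:ℝ) < Real.sqrt x := Real.sqrt_pos.2 hx
  have h1 : HasDerivAt Real.sqrt (1/(2*Real.sqrt x)) x := Real.hasDerivAt_sqrt hx.ne'
  have h2 : HasDerivAt (fun y => (Real.sqrt y)⁻¹)
      (-(1/(2*Real.sqrt x)) / (Real.sqrt x)^2) x := h1.inv hs.ne'
  have h3 := (h1.sub h2).const_mul c
  refine h3.congr_deriv ?_
  unfold igU'
  have hs2 : Real.sqrt x ^ 2 = x := Real.sq_sqrt hx.le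
  field_simp
  rw [hs2]; ring

lemma igU_injOn (c : ℝ) (hc : 0 < c) : InjOn (igU c) (Ioi 0) := by
  apply StrictMonoOn.injOn
  intro p hp q hq hpq
  rw [mem_Ioi] at hp hq
  have h1 : Real.sqrt p < Real.sqrt q := Real.sqrt_lt_sqrt hp.le hpq
  have hps : (0:ℝ) < Real.sqrt p := Real.sqrt_pos.2 hp
  have h2 : (Real.sqrt q)⁻¹ < (Real.sqrt p)⁻¹ := by
    apply inv_strictAnti₀ hps h1
  unfold igU
  apply mul_lt_mul_of_pos_left _ hc
  linarith

lemma igU_surj (c : ℝ) (hc : 0 < c) : igU c '' Ioi 0 = univ := by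
  apply eq_univ_of_forall
  intro y
  set r : ℝ := y / c with hr_def
  set D : ℝ := Real.sqrt (r^2 + 4) with hD_def
  have hD2 : D ^ 2 = r^2 + 4 := Real.sq_sqrt (by positivity)
  have hDr : -r < D := by
    have h1 : |r| < D := by
      rw [hD_def, ← Real.sqrt_sq_eq_abs]
      exact Real.sqrt_lt_sqrt (by positivity) (by linarith)
    cases abs_cases r with
    | inl h => linarith [h.1, abs_nonneg r]
    | inr h => linarith [h.1]
  set s : ℝ := (r + D) / 2 with hs_def
  have hs : 0 < s := by rw [hs_def]; linarith
  have hsq : s ^ 2 = r * s + 1 := by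
    rw [hs_def]
    nlinarith [hD2]
  refine ⟨s^2, ?_, ?_⟩
  · rw [mem_Ioi]; positivity
  · unfold igU
    rw [Real.sqrt_sq hs.le]
    rw [show y = c * r by rw [hr_def]; field_simp]
    congr 1
    field_simp
    linarith [hsq]

lemma igMoment_add_eq_two (c : ℝ) (hc : 0 < c) : igMoment c 0 + igMoment c 1 = 2 := by
  rw [igMoment_eq c 0 hc, igMoment_eq c 1 hc,
    ← integral_add (integrableOn_igKernel c 0 hc) (integrableOn_igKernel c 1 hc)]
  have key := integral_image_eq_integral_abs_deriv_smul (s := Ioi (0:ℝ))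
    (f := igU c) (f' := igU' c) measurableSet_Ioi
    (fun x hx => (igU_hasDerivAt c x (mem_Ioi.1 hx)).hasDerivWithinAt)
    (igU_injOn c hc) (fun y => Real.exp (-(1/2) * y^2))
  rw [igU_surj c hc] at key
  have hgauss : ∫ y in (univ : Set ℝ), Real.exp (-(1/2) * y^2) = Real.sqrt (2 * Real.pi) := by
    rw [Measure.restrict_univ, integral_gaussian]
    rw [show Real.pi / (1/2) = 2 * Real.pi by ring]
  have hptwise : ∀ x ∈ Ioi (0:ℝ),
      x ^ (0:ℝ) * igDensity c x + x ^ (1:ℝ) * igDensity c x =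
        (2 / Real.sqrt (2*Real.pi)) * (|igU' c x| • Real.exp (-(1/2) * (igU c x)^2)) := by
    intro x hx
    rw [mem_Ioi] at hx
    have hs : (0:ℝ) < Real.sqrt x := Real.sqrt_pos.2 hx
    have hs2 : Real.sqrt x ^ 2 = x := Real.sq_sqrt hx.le
    have hU'pos : 0 < igU' c x := by
      unfold igU'
      positivity
    rw [smul_eq_mul, abs_of_pos hU'pos, Real.rpow_zero, Real.rpow_one]
    unfold igDensity igU igU'
    rw [if_pos hx.le]
    have hsqrt3 : Real.sqrt (2 * Real.pi * x^3) = Real.sqrt (2*Real.pi) * Real.sqrt x ^ 3 := by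
      rw [Real.sqrt_mul (by positivity)]
      congr 1
      rw [show x ^ 3 = (Real.sqrt x ^ 3)^2 by
        linear_combination (-(x^2 + x * Real.sqrt x ^ 2 + Real.sqrt x ^ 4)) * hs2,
        Real.sqrt_sq (by positivity)]
    have hexp : Real.exp (-(c ^ 2 * (x - 1) ^ 2) / (2 * x)) =
        Real.exp (-(1/2) * (c * (Real.sqrt x - (Real.sqrt x)⁻¹))^2) := by
      congr 1
      field_simp
      linear_combination (x * Real.sqrt x ^ 2 - 1) * hs2
    rw [hsqrt3, hexp]
    have hS : (0:ℝ) < Real.sqrt (2 * Real.pi) := Real.sqrt_pos.2 (by positivity)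
    set E := Real.exp (-(1/2) * (c * (Real.sqrt x - (Real.sqrt x)⁻¹))^2)
    field_simp
    linear_combination (-(1 + x) * E) * hs2
  rw [setIntegral_congr_fun measurableSet_Ioi hptwise, MeasureTheory.integral_const_mul, ← key, hgauss]
  have hS : (0:ℝ) < Real.sqrt (2 * Real.pi) := Real.sqrt_pos.2 (by positivity)
  field_simp

lemma igMoment_one (c : ℝ) (hc : 0 < c) : igMoment c 1 = 1 := by
  have h0 := igMoment_symm c 1 hc
  have h2 := igMoment_add_eq_two c hc
  norm_num at h0
  linarith

lemma igMoment_zero (c : ℝ) (hc : 0 < c) : igMoment c 0 = 1 := by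
  have h0 := igMoment_symm c 1 hc
  norm_num at h0
  rw [h0, igMoment_one c hc]

lemma igMoment_convexOn (c : ℝ) (hc : 0 < c) : ConvexOn ℝ univ (igMoment c) := by
  refine ⟨convex_univ, ?_⟩
  intro p _ q _ a b ha hb hab
  simp only [smul_eq_mul]
  rw [igMoment_eq c p hc, igMoment_eq c q hc, igMoment_eq c (a*p+b*q) hc,
    ← MeasureTheory.integral_const_mul, ← MeasureTheory.integral_const_mul,
    ← integral_add ((integrableOn_igKernel c p hc).const_mul a)
      ((integrableOn_igKernel c q hc).const_mul b)]
  apply setIntegral_mono_on (integrableOn_igKernel c (a*p+b*q) hc)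
    (((integrableOn_igKernel c p hc).const_mul a).add
      ((integrableOn_igKernel c q hc).const_mul b)) measurableSet_Ioi
  intro x hx
  rw [mem_Ioi] at hx
  have hconv := convexOn_exp.2 (mem_univ (Real.log x * p)) (mem_univ (Real.log x * q)) ha hb hab
  simp only [smul_eq_mul] at hconv
  have hx' : x ^ (a*p+b*q) ≤ a * x ^ p + b * x ^ q := by
    rw [Real.rpow_def_of_pos hx, Real.rpow_def_of_pos hx, Real.rpow_def_of_pos hx,
      show Real.log x * (a*p+b*q) = a * (Real.log x * p) + b * (Real.log x * q) by ring]
    exact hconv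
  have hf := igDensity_nonneg c x hc
  calc x ^ (a*p+b*q) * igDensity c x ≤ (a * x ^ p + b * x ^ q) * igDensity c x :=
        mul_le_mul_of_nonneg_right hx' hf
    _ = a * (x ^ p * igDensity c x) + b * (x ^ q * igDensity c x) := by ring

lemma igMoment_mono (c : ℝ) (hc : 0 < c) {s t : ℝ} (hs : 1/2 ≤ s) (hst : s ≤ t) :
    igMoment c s ≤ igMoment c t := by
  rcases eq_or_lt_of_le hst with rfl | hlt
  · exact le_refl _
  have ht : 1/2 < t := lt_of_le_of_lt hs hlt
  have hden : 0 < 2*t - 1 := by linarith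
  set a : ℝ := (t - s) / (2*t - 1) with ha_def
  set b : ℝ := (s - 1 + t) / (2*t - 1) with hb_def
  have ha : 0 ≤ a := div_nonneg (by linarith) hden.le
  have hb : 0 ≤ b := div_nonneg (by linarith) hden.le
  have hab : a + b = 1 := by rw [ha_def, hb_def, ← add_div, div_eq_one_iff_eq hden.ne']; ring
  have hcx := (igMoment_convexOn c hc).2 (mem_univ (1-t)) (mem_univ t) ha hb hab
  simp only [smul_eq_mul] at hcx
  have harg : a * (1-t) + b * t = s := by
    rw [ha_def, hb_def, div_mul_eq_mul_div, div_mul_eq_mul_div, ← add_div, div_eq_iff hden.ne']; ring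
  rw [harg, igMoment_symm c t hc] at hcx
  calc igMoment c s ≤ a * igMoment c t + b * igMoment c t := hcx
    _ = igMoment c t := by rw [← add_mul, hab, one_mul]


end AuxIG

/-- `t* = sup {t ∈ ℝ : E[A^t] q₁ ≤ 1}`. -/
noncomputable def tStar (c q₁ : ℝ) : ℝ := sSup {t : ℝ | igMoment c t * q₁ ≤ 1}

open Set in
/-- If `q₁ ∈ (0,1)` and `q₁ E[A^{−1/2}] > 1`, then `1 < t* < 3/2`. -/
theorem tStar_between_one_and_three_halves (c q₁ : ℝ) (hc : 0 < c)
    (hq₁ : 0 < q₁) (hq₁' : q₁ < 1) (h : 1 < q₁ * igMoment c (-(1 / 2))) :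
    1 < tStar c q₁ ∧ tStar c q₁ < 3 / 2 := by
  have hsymm : igMoment c (-(1/2)) = igMoment c (3/2) := by
    have h' := igMoment_symm c (3/2) hc
    rwa [show (1:ℝ) - 3/2 = -(1/2) by norm_num] at h'
  have hM1 : igMoment c 1 = 1 := igMoment_one c hc
  have h32 : 1 / q₁ < igMoment c (3/2) := by
    rw [← hsymm, div_lt_iff₀ hq₁]
    linarith [h, mul_comm q₁ (igMoment c (-(1/2)))]
  have hinv : (1:ℝ) < 1/q₁ := by rw [lt_div_iff₀ hq₁]; linarith
  have hK : 0 < igMoment c (3/2) - 1 := by linarith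
  set K : ℝ := igMoment c (3/2) - 1 with hK_def
  set ε : ℝ := 1/q₁ - 1 with hε_def
  have hε : 0 < ε := by rw [hε_def]; linarith
  set δ : ℝ := min (1/4) (ε / (2*K)) with hδ_def
  have hδpos : 0 < δ := lt_min (by norm_num) (by positivity)
  have hδle : δ ≤ 1/4 := min_le_left _ _
  have hδK : 2 * δ * K ≤ ε := by
    have h1 : δ ≤ ε / (2*K) := min_le_right _ _
    rw [le_div_iff₀ (by linarith : (0:ℝ) < 2*K)] at h1
    linarith
  have hmem : (1 + δ) ∈ {t : ℝ | igMoment c t * q₁ ≤ 1} := by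
    have ha : (0:ℝ) ≤ 1 - 2*δ := by linarith
    have hb : (0:ℝ) ≤ 2*δ := by linarith
    have hab : (1 - 2*δ) + 2*δ = 1 := by ring
    have hcx := (igMoment_convexOn c hc).2 (mem_univ (1:ℝ)) (mem_univ (3/2:ℝ)) ha hb hab
    simp only [smul_eq_mul] at hcx
    rw [show (1 - 2*δ) * 1 + 2*δ * (3/2) = 1 + δ by ring, hM1] at hcx
    have hle : igMoment c (1+δ) ≤ 1/q₁ := by
      calc igMoment c (1+δ) ≤ (1 - 2*δ) * 1 + 2*δ * igMoment c (3/2) := hcx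
        _ = 1 + 2*δ*K := by rw [hK_def]; ring
        _ ≤ 1 + ε := by linarith
        _ = 1/q₁ := by rw [hε_def]; ring
    rw [mem_setOf_eq, ← le_div_iff₀ hq₁]
    simpa using hle
  have hcont : Continuous (igMoment c) := by
    rw [← continuousOn_univ]
    exact (igMoment_convexOn c hc).continuousOn isOpen_univ
  have hopen : IsOpen {t : ℝ | 1 < igMoment c t * q₁} :=
    isOpen_lt continuous_const (hcont.mul continuous_const)
  have hmem32 : (3/2:ℝ) ∈ {t : ℝ | 1 < igMoment c t * q₁} := by
    rw [mem_setOf_eq, ← div_lt_iff₀ hq₁]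
    simpa using h32
  obtain ⟨η, hη, hball⟩ := Metric.isOpen_iff.1 hopen _ hmem32
  set η' : ℝ := min η (1/2) with hη'_def
  have hη'pos : 0 < η' := lt_min hη (by norm_num)
  have hη'le : η' ≤ 1/2 := min_le_right _ _
  set s₀ : ℝ := 3/2 - η'/2 with hs₀_def
  have hs₀mem : s₀ ∈ {t : ℝ | 1 < igMoment c t * q₁} := by
    apply hball
    rw [Metric.mem_ball, Real.dist_eq, hs₀_def]
    rw [show (3:ℝ)/2 - η'/2 - 3/2 = -(η'/2) by ring, abs_neg,
      abs_of_pos (by linarith : (0:ℝ) < η'/2)]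
    calc η'/2 < η' := by linarith
      _ ≤ η := min_le_left _ _
  have hs₀half : (1:ℝ)/2 ≤ s₀ := by rw [hs₀_def]; linarith
  have hs₀lt : s₀ < 3/2 := by rw [hs₀_def]; linarith
  have hub : ∀ t ∈ {t : ℝ | igMoment c t * q₁ ≤ 1}, t ≤ s₀ := by
    intro t ht
    rw [mem_setOf_eq] at ht
    by_contra hlt
    push_neg at hlt
    have hmono := igMoment_mono c hc hs₀half hlt.le
    rw [mem_setOf_eq] at hs₀mem
    have : 1 < igMoment c t * q₁ :=
      lt_of_lt_of_le hs₀mem (mul_le_mul_of_nonneg_right hmono hq₁.le)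
    linarith
  have hbdd : BddAbove {t : ℝ | igMoment c t * q₁ ≤ 1} := ⟨s₀, hub⟩
  have hne : Set.Nonempty {t : ℝ | igMoment c t * q₁ ≤ 1} := ⟨1+δ, hmem⟩
  constructor
  · calc (1:ℝ) < 1 + δ := by linarith
      _ ≤ tStar c q₁ := le_csSup hbdd hmem
  · calc tStar c q₁ ≤ s₀ := csSup_le hne hub
      _ < 3/2 := hs₀lt
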